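/- Let H be a separable infinite-dimensional complex Hilbert space and T : H → H a bounded linear operator. Then the following are equivalent: (i) T satisfies the hypothesis of the Hypercyclicity Criterion; (ii) T is hypercyclic, and for every nonempty open subset U of H and every neighborhood W of zero in H, there exists a positive integer n such that T^n(U) ∩ W ≠ ∅ and T^{-n}(U) ∩ W ≠ ∅ (where T^{-n}(U) denotes the preimage of U under T^n). -/

import Mathlib

open Filter Topology Set

/-- `T` satisfies the hypothesis of the Hypercyclicity Criterion. -/
def SatisfiesHypercyclicityCriterion
    {H : Type*} [NormedAddCommGroup H] [InnerProductSpace ℂ H]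
    (T : H →L[ℂ] H) : Prop :=
  ∃ (Y Z : Set H) (n : ℕ → ℕ) (S : ℕ → H → H),
    Dense Y ∧ Dense Z ∧ StrictMono n ∧ (∀ k, 0 < n k) ∧
    (∀ y ∈ Y, Filter.Tendsto (fun k => (T ^ n k) y) Filter.atTop (nhds 0)) ∧
    (∀ z ∈ Z, Filter.Tendsto (fun k => S k z) Filter.atTop (nhds 0) ∧
      Filter.Tendsto (fun k => (T ^ n k) (S k z)) Filter.atTop (nhds z))

section Aux

variable {H : Type*} [NormedAddCommGroup H] [InnerProductSpace ℂ H]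

lemma pow_apply_comm (T : H →L[ℂ] H) (a b : ℕ) (v : H) :
    (T ^ a) ((T ^ b) v) = (T ^ b) ((T ^ a) v) := by
  rw [← ContinuousLinearMap.mul_apply, ← pow_add, add_comm, pow_add,
    ContinuousLinearMap.mul_apply]

lemma pow_add_apply (T : H →L[ℂ] H) (a b : ℕ) (v : H) :
    (T ^ (a + b)) v = (T ^ a) ((T ^ b) v) := by
  rw [pow_add, ContinuousLinearMap.mul_apply]

lemma tendsto_of_norm_sub_lt {f : ℕ → H} {z : H} (h : ∀ k, ‖f k - z‖ < 1 / (k + 1)) :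
    Tendsto f atTop (𝓝 z) := by
  rw [tendsto_iff_norm_sub_tendsto_zero]
  exact squeeze_zero (fun k => norm_nonneg _) (fun k => (h k).le)
    tendsto_one_div_add_atTop_nhds_zero_nat

lemma tendsto_zero_of_norm_lt {f : ℕ → H} (h : ∀ k, ‖f k‖ < 1 / (k + 1)) :
    Tendsto f atTop (𝓝 0) :=
  tendsto_of_norm_sub_lt (by simpa using h)

end Aux

/-- the Hypercyclicity Criterion is equivalent to hypercyclicity
plus the image/preimage condition of Proposition 2.7. -/
theorem criterion_iff_hypercyclic_and_condition
    {H : Type*} [NormedAddCommGroup H] [InnerProductSpace ℂ H]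
    [CompleteSpace H] [TopologicalSpace.SeparableSpace H]
    (hdim : ¬ FiniteDimensional ℂ H)
    (T : H →L[ℂ] H) :
    SatisfiesHypercyclicityCriterion T ↔
    ((∃ x : H, Dense (Set.range fun m : ℕ => (T ^ m) x)) ∧
      ∀ U W : Set H, IsOpen U → U.Nonempty → W ∈ nhds (0 : H) →
        ∃ n : ℕ, 0 < n ∧ ((T ^ n) '' U ∩ W).Nonempty ∧
          ((T ^ n) ⁻¹' U ∩ W).Nonempty) := by
  classical
  haveI : SecondCountableTopology H := UniformSpace.secondCountable_of_separable H
  obtain ⟨b, hbc, hbne, hbB⟩ := TopologicalSpace.exists_countable_basis H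
  have hbnonempty : b.Nonempty := by
    rcases Set.eq_empty_or_nonempty b with h | h
    · exfalso
      have h2 := hbB.sUnion_eq
      rw [h] at h2
      simp only [Set.sUnion_empty] at h2
      have : (0 : H) ∈ (∅ : Set H) := h2 ▸ Set.mem_univ (0 : H)
      exact this
    · exact h
  obtain ⟨f, hf⟩ := hbc.exists_eq_range hbnonempty
  have hfopen : ∀ j, IsOpen (f j) := fun j => hbB.isOpen (by rw [hf]; exact ⟨j, rfl⟩)
  have hfne : ∀ j, (f j).Nonempty := by
    intro j
    rw [Set.nonempty_iff_ne_empty]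
    intro h
    exact hbne (by rw [← h, hf]; exact ⟨j, rfl⟩)
  have hbasis : ∀ O : Set H, IsOpen O → O.Nonempty → ∃ j, f j ⊆ O := by
    intro O hO ⟨o, ho⟩
    obtain ⟨v, hvb, _, hvO⟩ := hbB.exists_subset_of_mem_open ho hO
    rw [hf] at hvb
    obtain ⟨j, rfl⟩ := hvb
    exact ⟨j, hvO⟩
  constructor
  · rintro ⟨Y, Z, ns, S, hY, hZ, hmono, hpos, hTY, hSZ⟩
    -- transitivity
    have trans : ∀ U V : Set H, IsOpen U → U.Nonempty → IsOpen V → V.Nonempty →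
        ∃ u ∈ U, ∃ n, (T ^ n) u ∈ V := by
      intro U V hU hUne hV hVne
      obtain ⟨y, hyY, hyU⟩ := hY.exists_mem_open hU hUne
      obtain ⟨z, hzZ, hzV⟩ := hZ.exists_mem_open hV hVne
      have h1 := hTY y hyY
      obtain ⟨hS1, hS2⟩ := hSZ z hzZ
      have hxk : Tendsto (fun k => y + S k z) atTop (𝓝 y) := by
        simpa using tendsto_const_nhds.add hS1
      have hTk : Tendsto (fun k => (T ^ ns k) (y + S k z)) atTop (𝓝 z) := by
        have heq : (fun k => (T ^ ns k) (y + S k z))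
            = fun k => (T ^ ns k) y + (T ^ ns k) (S k z) := by
          funext k; exact map_add _ _ _
        rw [heq]; simpa using h1.add hS2
      have hU' := hxk.eventually (hU.eventually_mem hyU)
      have hV' := hTk.eventually (hV.eventually_mem hzV)
      obtain ⟨k, hk1, hk2⟩ := (hU'.and hV').exists
      exact ⟨y + S k z, hk1, ns k, hk2⟩
    constructor
    · -- hypercyclicity via Baire
      have hopen : ∀ j : ℕ, IsOpen {x : H | ∃ n, (T ^ n) x ∈ f j} := by
        intro j
        have : {x : H | ∃ n, (T ^ n) x ∈ f j} = ⋃ n : ℕ, (fun v => (T ^ n) v) ⁻¹' f j := by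
          ext x; simp
        rw [this]
        exact isOpen_iUnion fun n => (hfopen j).preimage (T ^ n).continuous
      have hdense : ∀ j : ℕ, Dense {x : H | ∃ n, (T ^ n) x ∈ f j} := by
        intro j
        rw [dense_iff_inter_open]
        intro O hO hOne
        obtain ⟨u, huO, n, hn⟩ := trans O (f j) hO hOne (hfopen j) (hfne j)
        exact ⟨u, huO, n, hn⟩
      have hG := dense_iInter_of_isOpen hopen hdense
      obtain ⟨x, hx⟩ := hG.nonempty
      refine ⟨x, dense_iff_inter_open.2 fun O hO hOne => ?_⟩
      obtain ⟨j, hj⟩ := hbasis O hO hOne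
      simp only [Set.mem_iInter, Set.mem_setOf_eq] at hx
      obtain ⟨n, hn⟩ := hx j
      exact ⟨(T ^ n) x, hj hn, n, rfl⟩
    · -- the condition
      intro U W hU hUne hW
      obtain ⟨y, hyY, hyU⟩ := hY.exists_mem_open hU hUne
      obtain ⟨z, hzZ, hzU⟩ := hZ.exists_mem_open hU hUne
      have h1 : ∀ᶠ k in atTop, (T ^ ns k) y ∈ W := (hTY y hyY).eventually (by exact hW)
      obtain ⟨hS1, hS2⟩ := hSZ z hzZ
      have h2 : ∀ᶠ k in atTop, S k z ∈ W := hS1.eventually (by exact hW)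
      have h3 : ∀ᶠ k in atTop, (T ^ ns k) (S k z) ∈ U :=
        hS2.eventually (hU.eventually_mem hzU)
      obtain ⟨k, hk1, hk2, hk3⟩ := (h1.and (h2.and h3)).exists
      exact ⟨ns k, hpos k, ⟨(T ^ ns k) y, ⟨y, hyU, rfl⟩, hk1⟩,
        ⟨S k z, hk3, hk2⟩⟩
  · rintro ⟨⟨x, hx⟩, hcond⟩
    haveI : Nontrivial H := by
      by_contra h
      rw [not_nontrivial_iff_subsingleton] at h
      exact hdim (by infer_instance)
    haveI : ∀ p : H, NeBot (𝓝[≠] p) := fun p => Module.punctured_nhds_neBot ℂ H p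
    -- transitivity with large times
    have htl : ∀ U V : Set H, IsOpen U → U.Nonempty → IsOpen V → V.Nonempty → ∀ N : ℕ,
        ∃ u ∈ U, ∃ m > N, (T ^ m) u ∈ V := by
      intro U V hU hUne hV hVne N
      obtain ⟨p, ⟨a, rfl⟩, hpU⟩ := hx.exists_mem_open hU hUne
      have htail : Dense (Set.range fun i : ℕ => (T ^ (a + N + 1 + i)) x) := by
        have hfin : ((fun j : ℕ => (T ^ j) x) '' Set.Iic (a + N)).Finite :=
          (Set.finite_Iic _).image _
        have hsub : (Set.range fun m : ℕ => (T ^ m) x) \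
            ((fun j : ℕ => (T ^ j) x) '' Set.Iic (a + N)) ⊆
            Set.range fun i : ℕ => (T ^ (a + N + 1 + i)) x := by
          rintro q ⟨⟨m, rfl⟩, hnot⟩
          have hm : a + N + 1 ≤ m := by
            by_contra hc
            push_neg at hc
            exact hnot ⟨m, by simp; omega, rfl⟩
          refine ⟨m - (a + N + 1), ?_⟩
          show (T ^ (a + N + 1 + (m - (a + N + 1)))) x = (T ^ m) x
          have : a + N + 1 + (m - (a + N + 1)) = m := by omega
          rw [this]
        exact (hx.diff_finite hfin).mono hsub
      obtain ⟨q, ⟨i, rfl⟩, hqV⟩ := htail.exists_mem_open hV hVne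
      refine ⟨(T ^ a) x, hpU, N + 1 + i, by omega, ?_⟩
      have heq : (T ^ (N + 1 + i)) ((T ^ a) x) = (T ^ (a + N + 1 + i)) x := by
        have h3 : N + 1 + i + a = a + N + 1 + i := by omega
        rw [← pow_add_apply, h3]
      rw [heq]; exact hqV
    -- the key four-set condition with large times
    have hstar : ∀ U V W : Set H, IsOpen U → U.Nonempty → IsOpen V → V.Nonempty →
        W ∈ 𝓝 (0 : H) → ∀ N : ℕ, ∃ n > N,
          (∃ u ∈ U, (T ^ n) u ∈ W) ∧ (∃ w ∈ W, (T ^ n) w ∈ V) := by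
      intro U V W hU hUne hV hVne hW N
      obtain ⟨y, hyU, m, hmN, hmV⟩ := htl U V hU hUne hV hVne N
      have hU'open : IsOpen (U ∩ (T ^ m) ⁻¹' V) :=
        hU.inter (hV.preimage (T ^ m).continuous)
      have hU'ne : (U ∩ (T ^ m) ⁻¹' V).Nonempty := ⟨y, hyU, hmV⟩
      have hW' : W ∩ (T ^ m) ⁻¹' W ∈ 𝓝 (0 : H) := by
        refine Filter.inter_mem hW ?_
        have hc : ContinuousAt (T ^ m) (0 : H) := (T ^ m).continuous.continuousAt
        have : W ∈ 𝓝 ((T ^ m) (0 : H)) := by rw [map_zero]; exact hW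
        exact hc.preimage_mem_nhds this
      obtain ⟨n, hn0, h1, h2⟩ := hcond (U ∩ (T ^ m) ⁻¹' V) (W ∩ (T ^ m) ⁻¹' W)
        hU'open hU'ne hW'
      obtain ⟨v, ⟨u, huU', rfl⟩, hvW⟩ := h1
      obtain ⟨w, hwpre, hwW⟩ := h2
      refine ⟨n + m, by omega, ⟨u, huU'.1, ?_⟩, ⟨w, hwW.1, ?_⟩⟩
      · have heq : (T ^ (n + m)) u = (T ^ m) ((T ^ n) u) := by
          rw [add_comm, pow_add_apply]
        rw [heq]; exact hvW.2
      · have heq : (T ^ (n + m)) w = (T ^ m) ((T ^ n) w) := by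
          rw [add_comm, pow_add_apply]
        rw [heq]; exact hwpre.2
    -- Baire category argument in H × H
    have hne' : ∀ j : ℕ, (f j).Nonempty := hfne
    set E : ℕ → Set (H × H) := fun j => {p | ∃ n, (T ^ n) p.1 ∈ f j} with hE
    set F : ℕ → Set (H × H) := fun j => {p | ∃ n, (T ^ n) p.2 ∈ f j} with hF
    set D : ℕ × ℕ → Set (H × H) := fun Nm =>
      {p | ∃ n > Nm.1, ‖(T ^ n) p.1‖ < 1 / (Nm.2 + 1) ∧
        ∃ w : H, ‖w‖ < 1 / (Nm.2 + 1) ∧ ‖(T ^ n) w - p.2‖ < 1 / (Nm.2 + 1)} with hD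
    have hEopen : ∀ j, IsOpen (E j) := by
      intro j
      have : E j = ⋃ n : ℕ, (fun p : H × H => (T ^ n) p.1) ⁻¹' f j := by ext p; simp [hE]
      rw [this]
      exact isOpen_iUnion fun n =>
        (hfopen j).preimage ((T ^ n).continuous.comp continuous_fst)
    have hFopen : ∀ j, IsOpen (F j) := by
      intro j
      have : F j = ⋃ n : ℕ, (fun p : H × H => (T ^ n) p.2) ⁻¹' f j := by ext p; simp [hF]
      rw [this]
      exact isOpen_iUnion fun n =>
        (hfopen j).preimage ((T ^ n).continuous.comp continuous_snd)
    have hDopen : ∀ Nm, IsOpen (D Nm) := by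
      rintro ⟨N, m⟩
      have : D (N, m) = ⋃ (n : ℕ) (_ : n > N) (w : H) (_ : ‖w‖ < 1 / (m + 1)),
          ({p : H × H | ‖(T ^ n) p.1‖ < 1 / (m + 1)} ∩
           {p : H × H | ‖(T ^ n) w - p.2‖ < 1 / (m + 1)}) := by
        ext p
        simp only [hD, Set.mem_setOf_eq, Set.mem_iUnion, Set.mem_inter_iff]
        constructor
        · rintro ⟨n, hn, h1, w, hw1, hw2⟩
          exact ⟨n, hn, w, hw1, h1, hw2⟩
        · rintro ⟨n, hn, w, hw1, h1, hw2⟩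
          exact ⟨n, hn, h1, w, hw1, hw2⟩
      rw [this]
      refine isOpen_iUnion fun n => isOpen_iUnion fun _ =>
        isOpen_iUnion fun w => isOpen_iUnion fun _ => IsOpen.inter ?_ ?_
      · exact isOpen_lt (by fun_prop) continuous_const
      · exact isOpen_lt (by fun_prop) continuous_const
    have hEdense : ∀ j, Dense (E j) := by
      intro j
      rw [dense_iff_inter_open]
      intro O hO ⟨p, hp⟩
      obtain ⟨r, hr, hball⟩ := Metric.isOpen_iff.1 hO p hp
      obtain ⟨u, hu, n, _, hn⟩ := htl (Metric.ball p.1 r) (f j) Metric.isOpen_ball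
        ⟨p.1, Metric.mem_ball_self hr⟩ (hfopen j) (hne' j) 0
      refine ⟨(u, p.2), ?_, n, hn⟩
      apply hball
      rw [← ball_prod_same]
      exact ⟨hu, Metric.mem_ball_self hr⟩
    have hFdense : ∀ j, Dense (F j) := by
      intro j
      rw [dense_iff_inter_open]
      intro O hO ⟨p, hp⟩
      obtain ⟨r, hr, hball⟩ := Metric.isOpen_iff.1 hO p hp
      obtain ⟨u, hu, n, _, hn⟩ := htl (Metric.ball p.2 r) (f j) Metric.isOpen_ball
        ⟨p.2, Metric.mem_ball_self hr⟩ (hfopen j) (hne' j) 0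
      refine ⟨(p.1, u), ?_, n, hn⟩
      apply hball
      rw [← ball_prod_same]
      exact ⟨Metric.mem_ball_self hr, hu⟩
    have hDdense : ∀ Nm, Dense (D Nm) := by
      rintro ⟨N, m⟩
      rw [dense_iff_inter_open]
      intro O hO ⟨p, hp⟩
      obtain ⟨r, hr, hball⟩ := Metric.isOpen_iff.1 hO p hp
      have heps : (0 : ℝ) < 1 / (m + 1) := by positivity
      obtain ⟨n, hnN, ⟨u, hu, hun⟩, ⟨w, hw, hwn⟩⟩ :=
        hstar (Metric.ball p.1 r) (Metric.ball p.2 r) (Metric.ball (0 : H) (1 / (m + 1)))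
          Metric.isOpen_ball ⟨p.1, Metric.mem_ball_self hr⟩
          Metric.isOpen_ball ⟨p.2, Metric.mem_ball_self hr⟩
          (Metric.ball_mem_nhds 0 heps) N
      refine ⟨(u, (T ^ n) w), ?_, n, hnN, ?_, w, ?_, ?_⟩
      · apply hball
        rw [← ball_prod_same]
        exact ⟨hu, hwn⟩
      · simpa [mem_ball_zero_iff] using hun
      · simpa [mem_ball_zero_iff] using hw
      · simpa using heps
    -- intersect everything
    have hGdense : Dense (⋂ i : ℕ ⊕ ℕ ⊕ ℕ × ℕ,
        Sum.elim E (Sum.elim F D) i) := by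
      apply dense_iInter_of_isOpen
      · rintro (j | j | Nm)
        exacts [hEopen j, hFopen j, hDopen Nm]
      · rintro (j | j | Nm)
        exacts [hEdense j, hFdense j, hDdense Nm]
    obtain ⟨⟨y, z⟩, hyz⟩ := hGdense.nonempty
    simp only [Set.mem_iInter] at hyz
    have hyE : ∀ j : ℕ, ∃ n, (T ^ n) y ∈ f j := fun j => hyz (Sum.inl j)
    have hzF : ∀ j : ℕ, ∃ n, (T ^ n) z ∈ f j := fun j => hyz (Sum.inr (Sum.inl j))
    have hkey : ∀ N m : ℕ, ∃ n > N, ‖(T ^ n) y‖ < 1 / (m + 1) ∧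
        ∃ w : H, ‖w‖ < 1 / (m + 1) ∧ ‖(T ^ n) w - z‖ < 1 / (m + 1) := by
      intro N m
      exact hyz (Sum.inr (Sum.inr (N, m)))
    -- y and z are hypercyclic
    have hYdense : Dense (Set.range fun m : ℕ => (T ^ m) y) := by
      rw [dense_iff_inter_open]
      intro O hO hOne
      obtain ⟨j, hj⟩ := hbasis O hO hOne
      obtain ⟨n, hn⟩ := hyE j
      exact ⟨(T ^ n) y, hj hn, n, rfl⟩
    have hZdense : Dense (Set.range fun m : ℕ => (T ^ m) z) := by
      rw [dense_iff_inter_open]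
      intro O hO hOne
      obtain ⟨j, hj⟩ := hbasis O hO hOne
      obtain ⟨n, hn⟩ := hzF j
      exact ⟨(T ^ n) z, hj hn, n, rfl⟩
    -- build the sequence
    let g : ℕ → ℕ := fun k =>
      Nat.rec (hkey 0 0).choose (fun k ih => (hkey ih (k + 1)).choose) k
    have hgsucc : ∀ k, g (k + 1) = (hkey (g k) (k + 1)).choose := fun _ => rfl
    have hg0 : g 0 = (hkey 0 0).choose := rfl
    have hgs : ∀ k, g (k + 1) > g k := by
      intro k
      rw [hgsucc k]
      exact (hkey (g k) (k + 1)).choose_spec.1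
    have hmono : StrictMono g := strictMono_nat_of_lt_succ hgs
    have hgpos : ∀ k, 0 < g k := by
      intro k
      calc 0 < g 0 := by rw [hg0]; exact (hkey 0 0).choose_spec.1
        _ ≤ g k := hmono.monotone (Nat.zero_le k)
    have hbound : ∀ k : ℕ, ‖(T ^ g k) y‖ < 1 / (k + 1) ∧
        ∃ w : H, ‖w‖ < 1 / (k + 1) ∧ ‖(T ^ g k) w - z‖ < 1 / (k + 1) := by
      intro k
      cases k with
      | zero =>
        have h := (hkey 0 0).choose_spec
        rw [← hg0] at h
        refine ⟨by exact_mod_cast h.2.1, ?_⟩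
        obtain ⟨w, hw1, hw2⟩ := h.2.2
        exact ⟨w, by exact_mod_cast hw1, by exact_mod_cast hw2⟩
      | succ k =>
        have h := (hkey (g k) (k + 1)).choose_spec
        rw [← hgsucc k] at h
        have h1 : ‖(T ^ g (k + 1)) y‖ < 1 / ((k : ℝ) + 1 + 1) := by exact_mod_cast h.2.1
        obtain ⟨w, hw1, hw2⟩ := h.2.2
        refine ⟨by exact_mod_cast h1, w, by exact_mod_cast hw1, by exact_mod_cast hw2⟩
    let w : ℕ → H := fun k => (hbound k).2.choose
    have hwspec : ∀ k, ‖w k‖ < 1 / (k + 1) ∧ ‖(T ^ g k) (w k) - z‖ < 1 / (k + 1) :=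
      fun k => (hbound k).2.choose_spec
    let S : ℕ → H → H := fun k v =>
      if h : ∃ m : ℕ, (T ^ m) z = v then (T ^ h.choose) (w k) else 0
    refine ⟨Set.range fun m : ℕ => (T ^ m) y, Set.range fun m : ℕ => (T ^ m) z,
      g, S, hYdense, hZdense, hmono, hgpos, ?_, ?_⟩
    · rintro _ ⟨m, rfl⟩
      have h1 : Tendsto (fun k => (T ^ g k) y) atTop (𝓝 0) :=
        tendsto_zero_of_norm_lt fun k => (hbound k).1
      have h2 : Tendsto (fun k => (T ^ m) ((T ^ g k) y)) atTop (𝓝 0) := by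
        have := ((T ^ m).continuous.tendsto 0).comp h1
        simpa [map_zero, Function.comp_def] using this
      have heq : (fun k => (T ^ g k) ((T ^ m) y)) = fun k => (T ^ m) ((T ^ g k) y) :=
        funext fun k => pow_apply_comm T (g k) m y
      rw [heq]
      exact h2
    · rintro v ⟨m, hm⟩
      have hex : ∃ m' : ℕ, (T ^ m') z = v := ⟨m, hm⟩
      have hSval : ∀ k, S k v = (T ^ hex.choose) (w k) := by
        intro k
        simp only [S, dif_pos hex]
      have hwz : Tendsto w atTop (𝓝 0) :=
        tendsto_zero_of_norm_lt fun k => (hwspec k).1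
      have hTwz : Tendsto (fun k => (T ^ g k) (w k)) atTop (𝓝 z) :=
        tendsto_of_norm_sub_lt fun k => (hwspec k).2
      constructor
      · have h2 : Tendsto (fun k => (T ^ hex.choose) (w k)) atTop (𝓝 0) := by
          have := ((T ^ hex.choose).continuous.tendsto 0).comp hwz
          simpa [map_zero, Function.comp_def] using this
        simpa [hSval] using h2
      · have h2 : Tendsto (fun k => (T ^ hex.choose) ((T ^ g k) (w k))) atTop (𝓝 v) := by
          have := ((T ^ hex.choose).continuous.tendsto z).comp hTwz
          rw [hex.choose_spec] at this
          simpa [Function.comp_def] using this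
        have heq : (fun k => (T ^ g k) (S k v))
            = fun k => (T ^ hex.choose) ((T ^ g k) (w k)) := by
          funext k
          rw [hSval k, pow_apply_comm]
        rw [heq]
        exact h2
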